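/- Assume in addition λ_{2β} := 𝔼[e^{-2βX}] < ∞ and set r(2) = λ_{2β}/((ℓ−1)λ_β²). Then for every n ≥ 1, 𝔼[Z_n²] = (ℓ−1)/ℓ + ((ℓ−2)/ℓ)·Σ_{k=1}^{n−1} r(2)^k + ((ℓ−1)/ℓ)·r(2)^n, where the three contributions come from pairs of paths sharing no edge, sharing exactly k initial edges (1 ≤ k ≤ n−1), and coinciding, respectively. -/

import Mathlib

open MeasureTheory Real ProbabilityTheory

/-- The Laplace transform `λ_β = 𝔼[e^{-βX}]` of the conductance law. -/
noncomputable def lam {Ω : Type*} [MeasurableSpace Ω] (P : Measure Ω) (X : Ω → ℝ) (β : ℝ) : ℝ :=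
  ∫ ω, Real.exp (-β * X ω) ∂P

/-- The annealed critical point `h_a(β) = log(ℓ-1) + log λ_β`. -/
noncomputable def annealedCP {Ω : Type*} [MeasurableSpace Ω] (P : Measure Ω) (X : Ω → ℝ)
    (ℓ : ℕ) (β : ℝ) : ℝ :=
  Real.log ((ℓ : ℝ) - 1) + Real.log (lam P X β)

/-- A (nonempty) word indexing an edge of the rooted degree-`ℓ` tree: a first letter in
`Fin ℓ` together with a list of subsequent letters in `Fin (ℓ-1)`.  The `n`-step
self-avoiding paths from the root correspond to the words of length `n` (list length
`n-1`), and the edges along such a path are the nonempty prefixes of the word. -/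
abbrev TreeWord (ℓ : ℕ) : Type := Fin ℓ × List (Fin (ℓ - 1))

/-- The normalized partition function
`Z_n = (ℓ(ℓ-1)^{n-1} λ_β^n)⁻¹ Σ_{|w|=n} exp(-β Σ_{k=1}^n X_{(w_1,…,w_k)})`, with `Z_0 = 1`.
The inner sums run over the first letter `a : Fin ℓ` and the tail `g`, and the `k`-th edge
of the path `w = (a, List.ofFn g)` is the prefix `(a, (List.ofFn g).take (k-1))`. -/
noncomputable def Zpart {Ω : Type*} (ℓ : ℕ) (β lamβ : ℝ)
    (Xf : TreeWord ℓ → Ω → ℝ) : ℕ → Ω → ℝ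
  | 0 => fun _ => 1
  | n + 1 => fun ω =>
      ((ℓ : ℝ) * ((ℓ : ℝ) - 1) ^ n * lamβ ^ (n + 1))⁻¹ *
        ∑ a : Fin ℓ, ∑ g : Fin n → Fin (ℓ - 1),
          Real.exp (-β * ∑ k ∈ Finset.range (n + 1), Xf (a, (List.ofFn g).take k) ω)

namespace ZpartProof


/-- Number of shared initial edges (including the always-shared empty prefix). -/
def cnt {d n : ℕ} (g g' : Fin n → Fin d) : ℕ :=
  ((Finset.range (n+1)).filter (fun k => (List.ofFn g).take k = (List.ofFn g').take k)).card

lemma cnt_zero {d : ℕ} (g g' : Fin 0 → Fin d) : cnt g g' = 1 := by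
  simp [cnt]

lemma cnt_succ {d n : ℕ} (g g' : Fin (n+1) → Fin d) :
    cnt g g' = if g 0 = g' 0 then cnt (Fin.tail g) (Fin.tail g') + 1 else 1 := by
  unfold cnt
  rw [Finset.card_filter, Finset.sum_range_succ']
  simp only [List.take_zero, if_pos rfl]
  have hcond : ∀ k : ℕ, ((List.ofFn g).take (k+1) = (List.ofFn g').take (k+1)) ↔
      (g 0 = g' 0 ∧ (List.ofFn (Fin.tail g)).take k = (List.ofFn (Fin.tail g')).take k) := by
    intro k
    rw [List.ofFn_succ, List.ofFn_succ, List.take_succ_cons, List.take_succ_cons]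
    have hofn : ∀ (h : Fin (n+1) → Fin d),
        List.ofFn (Fin.tail h) = List.ofFn (fun i => h i.succ) := fun _ => rfl
    rw [hofn, hofn]
    simp [List.cons.injEq]
  by_cases h : g 0 = g' 0
  · rw [if_pos h, Finset.card_filter]
    congr 1
    apply Finset.sum_congr rfl
    intro k _
    have hofn : ∀ (h : Fin (n+1) → Fin d),
        List.ofFn (Fin.tail h) = List.ofFn (fun i => h i.succ) := fun _ => rfl
    simp only [hcond k, h, true_and, hofn]
  · rw [if_neg h]
    have : ∀ k ∈ Finset.range (n+1),
        (if (List.ofFn g).take (k+1) = (List.ofFn g').take (k+1) then 1 else 0) = 0 := by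
      intro k _
      rw [if_neg]
      rw [hcond k]
      exact fun hc => h hc.1
    rw [Finset.sum_congr rfl this]
    simp

noncomputable def Usum (d n : ℕ) (q : ℝ) : ℝ :=
  ∑ g : Fin n → Fin d, ∑ g' : Fin n → Fin d, q ^ cnt g g'

lemma Usum_zero (d : ℕ) (q : ℝ) : Usum d 0 q = q := by
  simp [Usum, cnt_zero]

lemma Usum_succ (d n : ℕ) (q : ℝ) :
    Usum d (n+1) q
      = (d:ℝ) * (q * Usum d n q) + (d:ℝ) * ((d:ℝ) - 1) * (((d:ℝ)^n)^2 * q) := by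
  classical
  have hsum : ∀ F : (Fin (n+1) → Fin d) → ℝ,
      (∑ g : Fin (n+1) → Fin d, F g)
        = ∑ x : Fin d, ∑ h : Fin n → Fin d, F (Fin.cons x h) := by
    intro F
    rw [← (Fintype.sum_prod_type (f := fun p : Fin d × (Fin n → Fin d) => F (Fin.cons p.1 p.2)))]
    exact (Fintype.sum_equiv (Fin.consEquiv (fun _ => Fin d))
      (fun p => F (Fin.cons p.1 p.2)) F (fun p => rfl)).symm
  unfold Usum
  rw [hsum]
  simp only [hsum]
  have key : ∀ x x' : Fin d,
      (∑ h : Fin n → Fin d, ∑ h' : Fin n → Fin d,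
          q ^ cnt (Fin.cons x h) (Fin.cons x' h'))
        = if x = x' then q * Usum d n q else ((d:ℝ)^n)^2 * q := by
    intro x x'
    by_cases h : x = x'
    · rw [if_pos h]
      unfold Usum
      rw [Finset.mul_sum]
      refine Finset.sum_congr rfl fun hh _ => ?_
      rw [Finset.mul_sum]
      refine Finset.sum_congr rfl fun hh' _ => ?_
      rw [cnt_succ]
      simp [Fin.cons_zero, Fin.tail_cons, h, pow_succ, mul_comm]
    · rw [if_neg h]
      have : ∀ hh hh' : Fin n → Fin d,
          q ^ cnt (Fin.cons x hh) (Fin.cons x' hh') = q := by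
        intro hh hh'
        rw [cnt_succ]
        simp [Fin.cons_zero, h]
      simp only [this, Finset.sum_const, Finset.card_univ]
      simp [Fintype.card_fun, mul_assoc]
      ring
  -- now sum key over x, x'
  calc (∑ x : Fin d, ∑ h : Fin n → Fin d, ∑ x' : Fin d, ∑ h' : Fin n → Fin d,
          q ^ cnt (Fin.cons x h) (Fin.cons x' h'))
      = ∑ x : Fin d, ∑ x' : Fin d,
          (if x = x' then q * Usum d n q else ((d:ℝ)^n)^2 * q) := by
        apply Finset.sum_congr rfl; intro x _
        rw [Finset.sum_comm]
        exact Finset.sum_congr rfl fun x' _ => key x x'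
    _ = ∑ x : Fin d, ((d:ℝ) * (((d:ℝ)^n)^2 * q)
          + (q * Usum d n q - ((d:ℝ)^n)^2 * q)) := by
        apply Finset.sum_congr rfl; intro x _
        have : ∀ x' : Fin d, (if x = x' then q * Usum d n q else ((d:ℝ)^n)^2 * q)
            = ((d:ℝ)^n)^2 * q + (if x = x' then q * Usum d n q - ((d:ℝ)^n)^2 * q else 0) := by
          intro x'; by_cases h : x = x' <;> simp [h]
        rw [Finset.sum_congr rfl fun x' _ => this x', Finset.sum_add_distrib,
          Finset.sum_ite_eq, if_pos (Finset.mem_univ x), Finset.sum_const, Finset.card_univ]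
        simp [nsmul_eq_mul, Fintype.card_fin]
    _ = (d:ℝ) * (q * Usum d n q) + (d:ℝ) * ((d:ℝ) - 1) * (((d:ℝ)^n)^2 * q) := by
        rw [Finset.sum_const, Finset.card_univ, Fintype.card_fin, nsmul_eq_mul]
        ring

lemma Usum_eq (d n : ℕ) (q : ℝ) :
    Usum d n q = q^(n+1) * (d:ℝ)^n
      + ((d:ℝ) - 1) * ∑ j ∈ Finset.range n, q^(n-j) * (d:ℝ)^(n+j) := by
  induction n with
  | zero => simp [Usum_zero]
  | succ n ih =>
      rw [Usum_succ, ih]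
      have hstep : (∑ j ∈ Finset.range (n+1), q^(n+1-j) * (d:ℝ)^(n+1+j))
          = (d:ℝ) * q * (∑ j ∈ Finset.range n, q^(n-j) * (d:ℝ)^(n+j)) + q * (d:ℝ)^(2*n+1) := by
        rw [Finset.sum_range_succ]
        rw [Finset.mul_sum]
        congr 1
        · apply Finset.sum_congr rfl; intro j hj
          rw [Finset.mem_range] at hj
          have h1 : n + 1 - j = (n - j) + 1 := by omega
          have h2 : n + 1 + j = (n + j) + 1 := by omega
          rw [h1, h2, pow_succ, pow_succ]
          ring
        · have : n + 1 - n = 1 := by omega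
          rw [this]
          have : n + 1 + n = 2*n + 1 := by omega
          rw [this, pow_one]
      rw [hstep]
      have h2n : ((d:ℝ)^n)^2 = (d:ℝ)^(2*n) := by rw [← pow_mul]; ring_nf
      rw [h2n]
      have : (d:ℝ)^(2*n+1) = (d:ℝ)^(2*n) * d := by rw [pow_succ]
      rw [this, pow_succ, pow_succ]
      ring



/-- number of shared edges of the two paths -/
def mshare {ℓ : ℕ} (N : ℕ) (a a' : Fin ℓ) (g g' : Fin N → Fin (ℓ-1)) : ℕ :=
  ((Finset.range (N+1)).filter
    (fun k => ((a, (List.ofFn g).take k) : TreeWord ℓ) = (a', (List.ofFn g').take k))).card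

lemma mshare_le {ℓ N : ℕ} (a a' : Fin ℓ) (g g' : Fin N → Fin (ℓ-1)) :
    mshare N a a' g g' ≤ N + 1 :=
  le_trans (Finset.card_filter_le _ _) (by rw [Finset.card_range])

section Pair

variable {Ω : Type*} [MeasurableSpace Ω] (P : Measure Ω) [IsProbabilityMeasure P]
  {ℓ : ℕ} (β : ℝ) (X : Ω → ℝ)
  (hInt : Integrable (fun ω => Real.exp (-β * X ω)) P)
  (hInt2 : Integrable (fun ω => Real.exp (-(2 * β) * X ω)) P)
  (Xf : TreeWord ℓ → Ω → ℝ) (hXf : ∀ w, Measurable (Xf w))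
  (hindep : iIndepFun Xf P)
  (hident : ∀ w, IdentDistrib (Xf w) X P P)

include hInt hInt2 hXf hindep hident in
theorem pair_key (N : ℕ) (a a' : Fin ℓ) (g g' : Fin N → Fin (ℓ-1)) :
    Integrable (fun ω =>
        Real.exp (-β * ∑ k ∈ Finset.range (N+1), Xf (a, (List.ofFn g).take k) ω) *
        Real.exp (-β * ∑ k ∈ Finset.range (N+1), Xf (a', (List.ofFn g').take k) ω)) P ∧
    ∫ ω, Real.exp (-β * ∑ k ∈ Finset.range (N+1), Xf (a, (List.ofFn g).take k) ω) *
         Real.exp (-β * ∑ k ∈ Finset.range (N+1), Xf (a', (List.ofFn g').take k) ω) ∂P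
      = lam P X (2*β) ^ (mshare N a a' g g')
          * lam P X β ^ (2*(N+1) - 2 * mshare N a a' g g') := by
  classical
  set e1 : ℕ → TreeWord ℓ := fun k => (a, (List.ofFn g).take k) with he1
  set e2 : ℕ → TreeWord ℓ := fun k => (a', (List.ofFn g').take k) with he2
  have hlen1 : ∀ k ∈ Finset.range (N+1), ((List.ofFn g).take k).length = k := by
    intro k hk
    rw [Finset.mem_range] at hk
    rw [List.length_take, List.length_ofFn]
    omega
  have hlen2 : ∀ k ∈ Finset.range (N+1), ((List.ofFn g').take k).length = k := by
    intro k hk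
    rw [Finset.mem_range] at hk
    rw [List.length_take, List.length_ofFn]
    omega
  have hinj1 : ∀ x ∈ Finset.range (N+1), ∀ y ∈ Finset.range (N+1), e1 x = e1 y → x = y := by
    intro x hx y hy hxy
    have := congrArg (fun p : TreeWord ℓ => p.2.length) hxy
    simpa [e1, hlen1 x hx, hlen1 y hy] using this
  have hinj2 : ∀ x ∈ Finset.range (N+1), ∀ y ∈ Finset.range (N+1), e2 x = e2 y → x = y := by
    intro x hx y hy hxy
    have := congrArg (fun p : TreeWord ℓ => p.2.length) hxy
    simpa [e2, hlen2 x hx, hlen2 y hy] using this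
  have hcross : ∀ x ∈ Finset.range (N+1), ∀ y ∈ Finset.range (N+1), e1 x = e2 y → x = y := by
    intro x hx y hy hxy
    have := congrArg (fun p : TreeWord ℓ => p.2.length) hxy
    simpa [e1, e2, hlen1 x hx, hlen2 y hy] using this
  set E1 : Finset (TreeWord ℓ) := (Finset.range (N+1)).image e1 with hE1
  set E2 : Finset (TreeWord ℓ) := (Finset.range (N+1)).image e2 with hE2
  set t : Finset (TreeWord ℓ) := E1 ∩ E2 with ht
  set s : Finset (TreeWord ℓ) := E1 ∪ E2 with hs
  -- identification of t
  have ht_eq : t = ((Finset.range (N+1)).filter (fun k => e1 k = e2 k)).image e1 := by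
    apply Finset.ext
    intro x
    simp only [ht, Finset.mem_inter, hE1, hE2, Finset.mem_image, Finset.mem_filter]
    constructor
    · rintro ⟨⟨k, hk, rfl⟩, ⟨j, hj, hje⟩⟩
      have : k = j := hcross k hk j hj hje.symm
      subst this
      exact ⟨k, ⟨hk, hje.symm⟩, rfl⟩
    · rintro ⟨k, ⟨hk, hke⟩, rfl⟩
      exact ⟨⟨k, hk, rfl⟩, ⟨k, hk, hke.symm⟩⟩
  have hm : t.card = mshare N a a' g g' := by
    rw [ht_eq, Finset.card_image_of_injOn]
    · rfl
    · intro x hx y hy hxy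
      exact hinj1 x (Finset.mem_of_mem_filter x hx) y (Finset.mem_of_mem_filter y hy) hxy
  have hcard1 : E1.card = N + 1 := by
    rw [hE1, Finset.card_image_of_injOn hinj1, Finset.card_range]
  have hcard2 : E2.card = N + 1 := by
    rw [hE2, Finset.card_image_of_injOn hinj2, Finset.card_range]
  have hts : t ⊆ s := (Finset.inter_subset_left).trans Finset.subset_union_left
  have hcards : s.card + t.card = 2 * (N+1) := by
    rw [hs, ht, Finset.card_union_add_card_inter, hcard1, hcard2]; ring
  -- the weighted family
  set Y : TreeWord ℓ → Ω → ℝ :=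
    fun e ω => (if e ∈ t then (2:ℝ) else 1) * Xf e ω with hY
  have hYmeas : ∀ e, Measurable (Y e) := fun e => (hXf e).const_mul _
  have hYindep : iIndepFun Y P :=
    hindep.comp (fun e x => (if e ∈ t then (2:ℝ) else 1) * x)
      (fun e => measurable_id.const_mul _)
  -- pointwise identity
  have hpt : ∀ ω,
      Real.exp (-β * ∑ k ∈ Finset.range (N+1), Xf (e1 k) ω) *
      Real.exp (-β * ∑ k ∈ Finset.range (N+1), Xf (e2 k) ω)
        = Real.exp ((-β) * (∑ e ∈ s, Y e) ω) := by
    intro ω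
    rw [← Real.exp_add]
    congr 1
    have hS1 : ∑ k ∈ Finset.range (N+1), Xf (e1 k) ω = ∑ e ∈ E1, Xf e ω := by
      rw [hE1]; exact (Finset.sum_image (f := fun e => Xf e ω) hinj1).symm
    have hS2 : ∑ k ∈ Finset.range (N+1), Xf (e2 k) ω = ∑ e ∈ E2, Xf e ω := by
      rw [hE2]; exact (Finset.sum_image (f := fun e => Xf e ω) hinj2).symm
    have happ : (∑ e ∈ s, Y e) ω = ∑ e ∈ s, Y e ω := by
      simp [Finset.sum_apply]
    rw [happ]
    have hsplit : ∑ e ∈ s, Y e ω = ∑ e ∈ s, Xf e ω + ∑ e ∈ t, Xf e ω := by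
      have : ∀ e ∈ s, Y e ω = Xf e ω + (if e ∈ t then Xf e ω else 0) := by
        intro e _
        by_cases h : e ∈ t <;> simp [hY, h] <;> ring
      rw [Finset.sum_congr rfl this, Finset.sum_add_distrib]
      congr 1
      rw [Finset.sum_ite_mem, Finset.inter_eq_right.mpr hts]
    have huni : ∑ e ∈ s, Xf e ω + ∑ e ∈ t, Xf e ω = ∑ e ∈ E1, Xf e ω + ∑ e ∈ E2, Xf e ω :=
      Finset.sum_union_inter
    rw [hsplit, huni, ← hS1, ← hS2]
    ring
  -- integrability of each factor
  have hint_e : ∀ e ∈ s, Integrable (fun ω => Real.exp ((-β) * Y e ω)) P := by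
    intro e _
    by_cases h : e ∈ t
    · have : (fun ω => Real.exp ((-β) * Y e ω)) = fun ω => Real.exp (-(2*β) * Xf e ω) := by
        funext ω; simp only [hY, if_pos h]; ring_nf
      rw [this]
      have hid : IdentDistrib (fun ω => Real.exp (-(2*β) * Xf e ω))
          (fun ω => Real.exp (-(2*β) * X ω)) P P :=
        (hident e).comp ((measurable_id.const_mul (-(2*β))).exp)
      exact hid.integrable_iff.mpr hInt2
    · have : (fun ω => Real.exp ((-β) * Y e ω)) = fun ω => Real.exp (-β * Xf e ω) := by
        funext ω; simp only [hY, if_neg h]; ring_nf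
      rw [this]
      have hid : IdentDistrib (fun ω => Real.exp (-β * Xf e ω))
          (fun ω => Real.exp (-β * X ω)) P P :=
        (hident e).comp ((measurable_id.const_mul (-β)).exp)
      exact hid.integrable_iff.mpr hInt
  constructor
  · have : (fun ω =>
        Real.exp (-β * ∑ k ∈ Finset.range (N+1), Xf (e1 k) ω) *
        Real.exp (-β * ∑ k ∈ Finset.range (N+1), Xf (e2 k) ω))
        = fun ω => Real.exp ((-β) * (∑ e ∈ s, Y e) ω) := funext hpt
    rw [this]
    exact hYindep.integrable_exp_mul_sum hYmeas hint_e
  · have hrw : ∫ ω,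
        Real.exp (-β * ∑ k ∈ Finset.range (N+1), Xf (e1 k) ω) *
        Real.exp (-β * ∑ k ∈ Finset.range (N+1), Xf (e2 k) ω) ∂P
        = mgf (∑ e ∈ s, Y e) P (-β) := by
      apply integral_congr_ae
      filter_upwards with ω using hpt ω
    rw [hrw, hYindep.mgf_sum hYmeas s]
    have hfactor : ∀ e ∈ s, mgf (Y e) P (-β)
        = if e ∈ t then lam P X (2*β) else lam P X β := by
      intro e _
      by_cases h : e ∈ t
      · rw [if_pos h]
        unfold mgf
        have h1 : (fun ω => Real.exp ((-β) * Y e ω)) = fun ω => Real.exp (-(2*β) * Xf e ω) := by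
          funext ω; simp only [hY, if_pos h]; ring_nf
        have hid : IdentDistrib (fun ω => Real.exp (-(2*β) * Xf e ω))
            (fun ω => Real.exp (-(2*β) * X ω)) P P :=
          (hident e).comp ((measurable_id.const_mul (-(2*β))).exp)
        calc ∫ ω, Real.exp ((-β) * Y e ω) ∂P
            = ∫ ω, Real.exp (-(2*β) * Xf e ω) ∂P := by rw [h1]
          _ = ∫ ω, Real.exp (-(2*β) * X ω) ∂P := hid.integral_eq
          _ = lam P X (2*β) := rfl
      · rw [if_neg h]
        unfold mgf
        have h1 : (fun ω => Real.exp ((-β) * Y e ω)) = fun ω => Real.exp (-β * Xf e ω) := by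
          funext ω; simp only [hY, if_neg h]; ring_nf
        have hid : IdentDistrib (fun ω => Real.exp (-β * Xf e ω))
            (fun ω => Real.exp (-β * X ω)) P P :=
          (hident e).comp ((measurable_id.const_mul (-β)).exp)
        calc ∫ ω, Real.exp ((-β) * Y e ω) ∂P
            = ∫ ω, Real.exp (-β * Xf e ω) ∂P := by rw [h1]
          _ = ∫ ω, Real.exp (-β * X ω) ∂P := hid.integral_eq
          _ = lam P X β := rfl
    rw [Finset.prod_congr rfl hfactor, Finset.prod_ite, Finset.prod_const, Finset.prod_const]
    have h1 : (s.filter (fun e => e ∈ t)) = t := by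
      rw [Finset.filter_mem_eq_inter, Finset.inter_eq_right.mpr hts]
    have h2 : (s.filter (fun e => e ∉ t)).card = 2*(N+1) - 2 * mshare N a a' g g' := by
      have := Finset.card_filter_add_card_filter_not (s := s) (p := fun e => e ∈ t)
      rw [h1] at this
      omega
    rw [h1, hm, h2]

end Pair

lemma mshare_ne {ℓ N : ℕ} {a a' : Fin ℓ} (h : a ≠ a') (g g' : Fin N → Fin (ℓ-1)) :
    mshare N a a' g g' = 0 := by
  unfold mshare
  rw [Finset.filter_false_of_mem, Finset.card_empty]
  intro k _ hk
  exact h (congrArg Prod.fst hk)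

lemma mshare_diag {ℓ N : ℕ} (a : Fin ℓ) (g g' : Fin N → Fin (ℓ-1)) :
    mshare N a a g g' = cnt g g' := by
  unfold mshare cnt
  congr 1
  apply Finset.filter_congr
  intro k _
  simp [Prod.ext_iff]

end ZpartProof

/-- Second moment identity: with `r(2) = λ_{2β}/((ℓ-1)λ_β²)`, for every `n ≥ 1`,
`𝔼[Z_n²] = (ℓ-1)/ℓ + ((ℓ-2)/ℓ)·Σ_{k=1}^{n-1} r(2)^k + ((ℓ-1)/ℓ)·r(2)^n`. -/
theorem Zpart_second_moment {Ω : Type*} [MeasurableSpace Ω] (P : Measure Ω)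
    [IsProbabilityMeasure P] (ℓ : ℕ) (hℓ : 3 ≤ ℓ) (β : ℝ) (hβ : 0 < β)
    (X : Ω → ℝ) (hX : Measurable X)
    (hInt : Integrable (fun ω => Real.exp (-β * X ω)) P)
    (hInt2 : Integrable (fun ω => Real.exp (-(2 * β) * X ω)) P)
    (Xf : TreeWord ℓ → Ω → ℝ) (hXf : ∀ w, Measurable (Xf w))
    (hindep : iIndepFun Xf P)
    (hident : ∀ w, IdentDistrib (Xf w) X P P)
    (n : ℕ) (hn : 1 ≤ n) :
    ∫ ω, (Zpart ℓ β (lam P X β) Xf n ω) ^ 2 ∂P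
      = ((ℓ : ℝ) - 1) / ℓ
        + (((ℓ : ℝ) - 2) / ℓ) *
            ∑ k ∈ Finset.Icc 1 (n - 1), (lam P X (2 * β) / (((ℓ : ℝ) - 1) * lam P X β ^ 2)) ^ k
        + (((ℓ : ℝ) - 1) / ℓ) * (lam P X (2 * β) / (((ℓ : ℝ) - 1) * lam P X β ^ 2)) ^ n := by
  classical
  obtain ⟨N, rfl⟩ : ∃ N, n = N + 1 := ⟨n - 1, by omega⟩
  have hpair := fun (p p' : Fin ℓ × (Fin N → Fin (ℓ - 1))) =>
    ZpartProof.pair_key P β X hInt hInt2 Xf hXf hindep hident N p.1 p'.1 p.2 p'.2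
  set lam1 := lam P X β with hlam1def
  set lam2 := lam P X (2 * β) with hlam2def
  have hlam1pos : 0 < lam1 := by
    have h : lam1 = mgf X P (-β) := rfl
    rw [h]; exact mgf_pos hInt
  have hlam1ne : lam1 ≠ 0 := ne_of_gt hlam1pos
  set q : ℝ := lam2 / lam1 ^ 2 with hqdef
  have hL3 : (3:ℝ) ≤ (ℓ:ℝ) := by exact_mod_cast hℓ
  have hL : (0:ℝ) < (ℓ:ℝ) := by linarith
  have hD : (0:ℝ) < (ℓ:ℝ) - 1 := by linarith
  have hDne : ((ℓ:ℝ) - 1) ≠ 0 := ne_of_gt hD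
  have hLne : ((ℓ:ℝ)) ≠ 0 := ne_of_gt hL
  have hAne : ((ℓ:ℝ) - 1) ^ N ≠ 0 := pow_ne_zero _ hDne
  have hcast : ((ℓ - 1 : ℕ) : ℝ) = (ℓ:ℝ) - 1 := by
    have h1 : 1 ≤ ℓ := by omega
    push_cast [h1]; ring
  -- unfold Z and expand the square
  simp only [Zpart]
  have step1 : ∀ ω : Ω, (((ℓ:ℝ) * ((ℓ:ℝ) - 1) ^ N * lam1 ^ (N + 1))⁻¹ *
      ∑ a : Fin ℓ, ∑ g : Fin N → Fin (ℓ - 1),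
        Real.exp (-β * ∑ k ∈ Finset.range (N + 1), Xf (a, (List.ofFn g).take k) ω)) ^ 2
      = (((ℓ:ℝ) * ((ℓ:ℝ) - 1) ^ N * lam1 ^ (N + 1))⁻¹) ^ 2 *
        ∑ p : Fin ℓ × (Fin N → Fin (ℓ - 1)), ∑ p' : Fin ℓ × (Fin N → Fin (ℓ - 1)),
          Real.exp (-β * ∑ k ∈ Finset.range (N + 1), Xf (p.1, (List.ofFn p.2).take k) ω) *
          Real.exp (-β * ∑ k ∈ Finset.range (N + 1), Xf (p'.1, (List.ofFn p'.2).take k) ω) := by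
    intro ω
    rw [mul_pow, ← Fintype.sum_prod_type'
      (f := fun a g => Real.exp (-β * ∑ k ∈ Finset.range (N + 1), Xf (a, (List.ofFn g).take k) ω))]
    congr 1
    rw [pow_two, Finset.sum_mul_sum]
  simp only [step1]
  rw [MeasureTheory.integral_const_mul]
  rw [MeasureTheory.integral_finset_sum _
    (fun p _ => MeasureTheory.integrable_finset_sum _ (fun p' _ => (hpair p p').1))]
  have step2 : ∀ p : Fin ℓ × (Fin N → Fin (ℓ - 1)),
      (∫ ω, ∑ p' : Fin ℓ × (Fin N → Fin (ℓ - 1)),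
        Real.exp (-β * ∑ k ∈ Finset.range (N + 1), Xf (p.1, (List.ofFn p.2).take k) ω) *
        Real.exp (-β * ∑ k ∈ Finset.range (N + 1), Xf (p'.1, (List.ofFn p'.2).take k) ω) ∂P)
      = ∑ p' : Fin ℓ × (Fin N → Fin (ℓ - 1)),
          lam1 ^ (2*(N+1)) * q ^ (ZpartProof.mshare N p.1 p'.1 p.2 p'.2) := by
    intro p
    rw [MeasureTheory.integral_finset_sum _ (fun p' _ => (hpair p p').1)]
    refine Finset.sum_congr rfl fun p' _ => ?_
    rw [(hpair p p').2]
    -- rewrite via q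
    have hm : ZpartProof.mshare N p.1 p'.1 p.2 p'.2 ≤ N + 1 := ZpartProof.mshare_le _ _ _ _
    set m := ZpartProof.mshare N p.1 p'.1 p.2 p'.2
    have hx2 : lam1^(2*(N+1)) = lam1^(2*m) * lam1^(2*(N+1)-2*m) := by
      rw [← pow_add]; congr 1; omega
    rw [hqdef, div_pow, ← pow_mul, hx2]
    field_simp
  rw [Finset.sum_congr rfl (fun p _ => step2 p)]
  -- pull out the constant and compute the combinatorial sum
  have hpull : (∑ p : Fin ℓ × (Fin N → Fin (ℓ - 1)), ∑ p' : Fin ℓ × (Fin N → Fin (ℓ - 1)),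
        lam1 ^ (2*(N+1)) * q ^ (ZpartProof.mshare N p.1 p'.1 p.2 p'.2))
      = lam1 ^ (2*(N+1)) * ∑ p : Fin ℓ × (Fin N → Fin (ℓ - 1)),
          ∑ p' : Fin ℓ × (Fin N → Fin (ℓ - 1)), q ^ (ZpartProof.mshare N p.1 p'.1 p.2 p'.2) := by
    rw [Finset.mul_sum]
    exact Finset.sum_congr rfl fun p _ => (Finset.mul_sum _ _ _).symm
  rw [hpull]
  -- evaluate the double sum
  have hV : (∑ p : Fin ℓ × (Fin N → Fin (ℓ - 1)), ∑ p' : Fin ℓ × (Fin N → Fin (ℓ - 1)),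
        q ^ (ZpartProof.mshare N p.1 p'.1 p.2 p'.2))
      = (ℓ:ℝ) * ZpartProof.Usum (ℓ-1) N q
          + (ℓ:ℝ) * ((ℓ:ℝ) - 1) * ((((ℓ:ℝ) - 1)^N)^2 * 1) := by
    have hflat : (∑ p : Fin ℓ × (Fin N → Fin (ℓ - 1)), ∑ p' : Fin ℓ × (Fin N → Fin (ℓ - 1)),
          q ^ (ZpartProof.mshare N p.1 p'.1 p.2 p'.2))
        = ∑ a : Fin ℓ, ∑ a' : Fin ℓ, ∑ g : Fin N → Fin (ℓ-1), ∑ g' : Fin N → Fin (ℓ-1),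
            q ^ (ZpartProof.mshare N a a' g g') := by
      rw [Fintype.sum_prod_type]
      refine Finset.sum_congr rfl fun a _ => ?_
      rw [Finset.sum_comm, Fintype.sum_prod_type]
      refine Finset.sum_congr rfl fun a' _ => ?_
      rw [Finset.sum_comm]
    rw [hflat]
    have hinner : ∀ a a' : Fin ℓ,
        (∑ g : Fin N → Fin (ℓ-1), ∑ g' : Fin N → Fin (ℓ-1), q ^ (ZpartProof.mshare N a a' g g'))
        = if a = a' then ZpartProof.Usum (ℓ-1) N q else (((ℓ:ℝ)-1)^N)^2 := by
      intro a a'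
      by_cases h : a = a'
      · subst h
        rw [if_pos rfl]
        exact Finset.sum_congr rfl fun g _ => Finset.sum_congr rfl fun g' _ => by
          rw [ZpartProof.mshare_diag]
      · rw [if_neg h]
        have hone : ∀ g g' : Fin N → Fin (ℓ-1), q ^ (ZpartProof.mshare N a a' g g') = 1 :=
          fun g g' => by rw [ZpartProof.mshare_ne h, pow_zero]
        simp only [hone, Finset.sum_const, Finset.card_univ, nsmul_eq_mul, mul_one,
          Fintype.card_fun, Fintype.card_fin]
        push_cast [hcast]
        ring
    calc (∑ a : Fin ℓ, ∑ a' : Fin ℓ, ∑ g : Fin N → Fin (ℓ-1), ∑ g' : Fin N → Fin (ℓ-1),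
            q ^ (ZpartProof.mshare N a a' g g'))
        = ∑ a : Fin ℓ, ∑ a' : Fin ℓ,
            (if a = a' then ZpartProof.Usum (ℓ-1) N q else (((ℓ:ℝ)-1)^N)^2) := by
          exact Finset.sum_congr rfl fun a _ => Finset.sum_congr rfl fun a' _ => hinner a a'
      _ = ∑ a : Fin ℓ, ((ℓ:ℝ) * ((((ℓ:ℝ)-1)^N)^2)
            + (ZpartProof.Usum (ℓ-1) N q - (((ℓ:ℝ)-1)^N)^2)) := by
          refine Finset.sum_congr rfl fun a _ => ?_
          have hsplit : ∀ a' : Fin ℓ,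
              (if a = a' then ZpartProof.Usum (ℓ-1) N q else (((ℓ:ℝ)-1)^N)^2)
              = (((ℓ:ℝ)-1)^N)^2
                + (if a = a' then ZpartProof.Usum (ℓ-1) N q - (((ℓ:ℝ)-1)^N)^2 else 0) := by
            intro a'; by_cases h : a = a' <;> simp [h]
          rw [Finset.sum_congr rfl fun a' _ => hsplit a', Finset.sum_add_distrib,
            Finset.sum_ite_eq, if_pos (Finset.mem_univ a), Finset.sum_const, Finset.card_univ]
          simp [nsmul_eq_mul, Fintype.card_fin]
      _ = (ℓ:ℝ) * ZpartProof.Usum (ℓ-1) N q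
            + (ℓ:ℝ) * ((ℓ:ℝ) - 1) * ((((ℓ:ℝ) - 1)^N)^2 * 1) := by
          rw [Finset.sum_const, Finset.card_univ, Fintype.card_fin, nsmul_eq_mul]
          ring
  rw [hV]
  -- closed form for Usum
  rw [ZpartProof.Usum_eq, hcast]
  -- identify the geometric sums
  have hρq : lam2 / (((ℓ:ℝ) - 1) * lam1 ^ 2) = q / ((ℓ:ℝ) - 1) := by
    rw [hqdef, div_div, mul_comm]
  rw [hρq]
  have hIcc : (∑ k ∈ Finset.Icc 1 (N + 1 - 1), (q / ((ℓ:ℝ) - 1))^k)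
      = ∑ j ∈ Finset.range N, (q / ((ℓ:ℝ) - 1))^(N-j) := by
    have hN : N + 1 - 1 = N := rfl
    rw [hN, ← Finset.Ico_add_one_right_eq_Icc, Finset.sum_Ico_eq_sum_range]
    rw [← Finset.sum_range_reflect]
    refine Finset.sum_congr rfl fun j hj => ?_
    rw [Finset.mem_range] at hj
    congr 1
    omega
  rw [hIcc]
  have hsum2 : (∑ j ∈ Finset.range N, q^(N-j) * ((ℓ:ℝ) - 1)^(N+j))
      = (((ℓ:ℝ) - 1)^N)^2 * ∑ j ∈ Finset.range N, (q / ((ℓ:ℝ) - 1))^(N-j) := by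
    rw [Finset.mul_sum]
    refine Finset.sum_congr rfl fun j hj => ?_
    rw [Finset.mem_range] at hj
    have hx2 : (((ℓ:ℝ) - 1)^N)^2 = ((ℓ:ℝ) - 1)^(N+j) * ((ℓ:ℝ) - 1)^(N-j) := by
      rw [← pow_add, ← pow_mul]; congr 1; omega
    rw [div_pow q ((ℓ:ℝ) - 1) (N-j), hx2, mul_assoc,
      mul_comm (((ℓ:ℝ) - 1)^(N-j)) (q^(N-j) / ((ℓ:ℝ) - 1)^(N-j)),
      div_mul_cancel₀ _ (pow_ne_zero _ hDne), mul_comm]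
  rw [hsum2]
  have hρpow : (q / ((ℓ:ℝ) - 1))^(N+1) = q^(N+1) / (((ℓ:ℝ) - 1) * ((ℓ:ℝ) - 1)^N) := by
    rw [div_pow]
    congr 1
    rw [pow_succ]
    ring
  rw [hρpow]
  have hpow2 : lam1 ^ (2*(N+1)) = (lam1 ^ (N+1))^2 := by
    rw [← pow_mul]; congr 1; ring
  rw [hpow2]
  -- final algebra
  set A := ((ℓ:ℝ) - 1)^N
  set B := q^(N+1)
  set S' := ∑ j ∈ Finset.range N, (q / ((ℓ:ℝ) - 1))^(N-j)
  have hlamne : lam1 ^ (N+1) ≠ 0 := pow_ne_zero _ hlam1ne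
  field_simp
  ring
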